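/- Let X and Y be finite simple graphs with X ∘ Y their lexicographic product. If X is disconnected and there exist distinct vertices y_0 ≠ y_1 of Y with the same open neighborhood (i.e. S_Y ≠ ∅), then the natural embedding of Aut(X) ≀ Aut(Y) into Aut(X ∘ Y) is not surjective. -/

import Mathlib

/-- The lexicographic product `X ∘ Y`: vertex set `X × Y`, with
`(i,α) ~ (j,β)` iff (`α = β` and `i ~_X j`) or `α ~_Y β`. -/
def lexProd {α β : Type*} (X : SimpleGraph α) (Y : SimpleGraph β) :
    SimpleGraph (α × β) where
  Adj p q := (p.2 = q.2 ∧ X.Adj p.1 q.1) ∨ Y.Adj p.2 q.2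
  symm := by
    constructor
    rintro ⟨i, a⟩ ⟨j, b⟩ (⟨h1, h2⟩ | h)
    · exact Or.inl ⟨h1.symm, h2.symm⟩
    · exact Or.inr h.symm
  loopless := by
    constructor
    rintro ⟨i, a⟩ (⟨-, h⟩ | h)
    · exact X.irrefl h
    · exact Y.irrefl h

/-- A permutation of the vertices is a graph automorphism if it preserves adjacency. -/
def IsGraphAut {α : Type*} (X : SimpleGraph α) (σ : Equiv.Perm α) : Prop :=
  ∀ i j, X.Adj (σ i) (σ j) ↔ X.Adj i j

/-- The permutation `(i,a) ↦ (σ_a i, τ a)` of `α × β`. -/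
def wreathMap {α β : Type*} (σ : β → Equiv.Perm α) (τ : Equiv.Perm β) :
    Equiv.Perm (α × β) where
  toFun p := (σ p.2 p.1, τ p.2)
  invFun q := ((σ (τ.symm q.2)).symm q.1, τ.symm q.2)
  left_inv := by rintro ⟨i, a⟩; simp
  right_inv := by rintro ⟨j, b⟩; simp

/-- If `X` is disconnected with at least 2 vertices and `Y` has two
distinct vertices with the same open neighborhood (`S_Y ≠ ∅`), then the natural
embedding of `Aut(X) ≀ Aut(Y)` into `Aut(X ∘ Y)` is not surjective. -/
theorem wreath_embedding_not_surjective {α β : Type*} [Fintype α] [Fintype β]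
    (X : SimpleGraph α) (Y : SimpleGraph β)
    (hcard : 2 ≤ Fintype.card α) (hconn : ¬ X.Connected)
    (hS : ∃ y₀ y₁ : β, y₀ ≠ y₁ ∧ Y.neighborSet y₀ = Y.neighborSet y₁) :
    ∃ f : Equiv.Perm (α × β), IsGraphAut (lexProd X Y) f ∧
      ∀ (σ : β → Equiv.Perm α) (τ : Equiv.Perm β),
        (∀ a, IsGraphAut X (σ a)) → IsGraphAut Y τ → wreathMap σ τ ≠ f := by
  classical
  obtain ⟨y₀, y₁, hne, hN⟩ := hS
  have key : ∀ a b, Y.Adj (Equiv.swap y₀ y₁ a) b ↔ Y.Adj a b := by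
    intro a b
    rcases eq_or_ne a y₀ with rfl | h0
    · rw [Equiv.swap_apply_left, ← SimpleGraph.mem_neighborSet,
        ← SimpleGraph.mem_neighborSet, hN]
    rcases eq_or_ne a y₁ with rfl | h1
    · rw [Equiv.swap_apply_right, ← SimpleGraph.mem_neighborSet,
        ← SimpleGraph.mem_neighborSet, hN]
    · rw [Equiv.swap_apply_of_ne_of_ne h0 h1]
  have hα : Nonempty α := Fintype.card_pos_iff.mp (by omega)
  rw [SimpleGraph.connected_iff] at hconn
  push_neg at hconn
  have hpre : ¬ X.Preconnected := fun h => (hconn h).false hα.some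
  rw [SimpleGraph.Preconnected] at hpre
  push_neg at hpre
  obtain ⟨u, v, huv⟩ := hpre
  set s : α → Equiv.Perm β := fun i => if X.Reachable u i then Equiv.swap y₀ y₁ else 1 with hs
  have hinv : ∀ i a, s i (s i a) = a := by
    intro i a
    by_cases h : X.Reachable u i <;> simp [hs, h]
  have hkey2 : ∀ i a b, Y.Adj (s i a) b ↔ Y.Adj a b := by
    intro i a b
    by_cases h : X.Reachable u i <;> simp [hs, h, key]
  have hkey3 : ∀ i j a b, Y.Adj (s i a) (s j b) ↔ Y.Adj a b := by
    intro i j a b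
    rw [hkey2, Y.adj_comm, hkey2, Y.adj_comm]
  have hsadj : ∀ i j, X.Adj i j → s i = s j := by
    intro i j hij
    have : X.Reachable u i ↔ X.Reachable u j :=
      ⟨fun h => h.trans hij.reachable, fun h => h.trans hij.symm.reachable⟩
    simp only [hs]
    by_cases h : X.Reachable u i
    · rw [if_pos h, if_pos (this.mp h)]
    · rw [if_neg h, if_neg (fun h' => h (this.mpr h'))]
  refine ⟨⟨fun p => (p.1, s p.1 p.2), fun p => (p.1, s p.1 p.2),
      fun p => by simp [hinv], fun p => by simp [hinv]⟩, ?_, ?_⟩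
  · rintro ⟨i, a⟩ ⟨j, b⟩
    show (s i a = s j b ∧ X.Adj i j) ∨ Y.Adj (s i a) (s j b) ↔
      (a = b ∧ X.Adj i j) ∨ Y.Adj a b
    rw [hkey3]
    constructor
    · rintro (⟨h1, h2⟩ | h)
      · refine Or.inl ⟨?_, h2⟩
        rw [hsadj i j h2] at h1
        exact (s j).injective h1
      · exact Or.inr h
    · rintro (⟨rfl, h2⟩ | h)
      · exact Or.inl ⟨by rw [hsadj i j h2], h2⟩
      · exact Or.inr h
  · intro σ τ hσ hτ hEq
    have h1 : (wreathMap σ τ (u, y₀)).2 = y₁ := by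
      rw [hEq]
      show (if X.Reachable u u then Equiv.swap y₀ y₁ else (1 : Equiv.Perm β)) y₀ = y₁
      rw [if_pos (SimpleGraph.Reachable.refl u), Equiv.swap_apply_left]
    have h2 : (wreathMap σ τ (v, y₀)).2 = y₀ := by
      rw [hEq]
      show (if X.Reachable u v then Equiv.swap y₀ y₁ else (1 : Equiv.Perm β)) y₀ = y₀
      rw [if_neg huv]
      rfl
    exact hne ((h1.symm.trans h2).symm)
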